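/- Let Φ = ({E_i}_{i=0}^d; {E*_i}_{i=0}^d) be a symmetric idempotent system on V with antiautomorphism †, let ⟨ , ⟩ be a nonzero bilinear form on V satisfying ⟨Au, v⟩ = ⟨u, A^† v⟩ for all A ∈ End(V) and u,v ∈ V, and set ν = tr(E_0 E*_0)^{-1}. Then for any nonzero ξ ∈ E_0 V and nonzero ξ* ∈ E*_0 V: each of ⟨ξ,ξ⟩, ⟨ξ*,ξ*⟩, ⟨ξ, ξ*⟩ is nonzero, and ⟨ξ,ξ⟩ ⟨ξ*,ξ*⟩ = ν ⟨ξ, ξ*⟩². -/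

import Mathlib

theorem stmt_18 (d : ℕ) (F V : Type*) [Field F] [AddCommGroup V] [Module F V]
    [FiniteDimensional F V] (hdim : Module.finrank F V = d + 1)
    (E Es : Fin (d + 1) → Module.End F V)
    (hE : ∀ i j, E i * E j = if i = j then E i else 0)
    (hErk : ∀ i, Module.finrank F (LinearMap.range (E i)) = 1)
    (hEs : ∀ i j, Es i * Es j = if i = j then Es i else 0)
    (hEsrk : ∀ i, Module.finrank F (LinearMap.range (Es i)) = 1)
    (hnz : ∀ i, E 0 * Es i * E 0 ≠ 0)
    (hnzs : ∀ i, Es 0 * E i * Es 0 ≠ 0)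
    (dag : Module.End F V ≃ₗ[F] Module.End F V)
    (hdagmul : ∀ Y Z, dag (Y * Z) = dag Z * dag Y)
    (hdagE : ∀ i, dag (E i) = E i)
    (hdagEs : ∀ i, dag (Es i) = Es i)
    (ν : F) (htr : LinearMap.trace F V (E 0 * Es 0) ≠ 0)
    (hν : ν = (LinearMap.trace F V (E 0 * Es 0))⁻¹)
    (B : LinearMap.BilinForm F V) (hB0 : B ≠ 0)
    (hB : ∀ (X : Module.End F V) (u v : V), B (X u) v = B u (dag X v))
    (ξ ξs : V) (hξmem : ξ ∈ LinearMap.range (E 0)) (hξ : ξ ≠ 0)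
    (hξsmem : ξs ∈ LinearMap.range (Es 0)) (hξs : ξs ≠ 0) :
    B ξ ξ ≠ 0 ∧ B ξs ξs ≠ 0 ∧ B ξ ξs ≠ 0 ∧
      B ξ ξ * B ξs ξs = ν * (B ξ ξs) ^ 2 := by
  have hEE0 : E 0 * E 0 = E 0 := by simpa using hE 0 0
  have hEsEs0 : Es 0 * Es 0 = Es 0 := by simpa using hEs 0 0
  -- E 0 fixes ξ
  have hEξ : E 0 ξ = ξ := by
    obtain ⟨w, hw⟩ := hξmem
    have h := congrArg (fun f : Module.End F V => f w) hEE0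
    simpa [Module.End.mul_apply, hw] using h
  have hEsξs : Es 0 ξs = ξs := by
    obtain ⟨w, hw⟩ := hξsmem
    have h := congrArg (fun f : Module.End F V => f w) hEsEs0
    simpa [Module.End.mul_apply, hw] using h
  -- ranges are spans
  have hrangeE : LinearMap.range (E 0) = Submodule.span F {ξ} := by
    refine (Submodule.eq_of_le_of_finrank_le ?_ ?_).symm
    · rwa [Submodule.span_singleton_le_iff_mem]
    · rw [hErk 0, finrank_span_singleton hξ]
  have hrangeEs : LinearMap.range (Es 0) = Submodule.span F {ξs} := by
    refine (Submodule.eq_of_le_of_finrank_le ?_ ?_).symm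
    · rwa [Submodule.span_singleton_le_iff_mem]
    · rw [hEsrk 0, finrank_span_singleton hξs]
  have hscalE : ∀ v, ∃ c : F, E 0 v = c • ξ := by
    intro v
    have : E 0 v ∈ Submodule.span F {ξ} := hrangeE ▸ LinearMap.mem_range_self _ v
    obtain ⟨c, hc⟩ := Submodule.mem_span_singleton.mp this
    exact ⟨c, hc.symm⟩
  have hscalEs : ∀ v, ∃ c : F, Es 0 v = c • ξs := by
    intro v
    have : Es 0 v ∈ Submodule.span F {ξs} := hrangeEs ▸ LinearMap.mem_range_self _ v
    obtain ⟨c, hc⟩ := Submodule.mem_span_singleton.mp this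
    exact ⟨c, hc.symm⟩
  obtain ⟨a, ha⟩ := hscalEs ξ
  obtain ⟨b, hb⟩ := hscalE ξs
  -- E0 * Es0 * E0 = (a*b) • E0
  have hT : E 0 * Es 0 * E 0 = (a * b) • E 0 := by
    ext v
    obtain ⟨c, hc⟩ := hscalE v
    simp only [Module.End.mul_apply, LinearMap.smul_apply, hc, map_smul, ha, hb, smul_smul]
    ring_nf
  -- trace of E 0 is 1
  have hproj : LinearMap.IsProj (LinearMap.range (E 0)) (E 0) := by
    refine ⟨fun v => LinearMap.mem_range_self _ v, ?_⟩
    rintro x ⟨w, rfl⟩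
    have h := congrArg (fun f : Module.End F V => f w) hEE0
    simpa [Module.End.mul_apply] using h
  have htrE0 : LinearMap.trace F V (E 0) = 1 := by
    rw [hproj.trace, hErk 0, Nat.cast_one]
  have htrab : LinearMap.trace F V (E 0 * Es 0) = a * b := by
    have h1 : LinearMap.trace F V (E 0 * Es 0 * E 0) = LinearMap.trace F V (E 0 * Es 0) := by
      rw [LinearMap.trace_mul_comm, ← mul_assoc, hEE0]
    rw [← h1, hT, map_smul, htrE0, smul_eq_mul, mul_one]
  have hab : a * b ≠ 0 := htrab ▸ htr
  have hbne : b ≠ 0 := right_ne_zero_of_mul hab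
  have hνab : ν * (a * b) = 1 := by
    rw [hν, htrab]
    exact inv_mul_cancel₀ hab
  -- adjointness
  have hBE : ∀ u v, B (E 0 u) v = B u (E 0 v) := fun u v => by rw [hB, hdagE]
  have hBEs : ∀ u v, B (Es 0 u) v = B u (Es 0 v) := fun u v => by rw [hB, hdagEs]
  -- if some nonzero w has B w · = 0 then B = 0
  have hkey : ∀ w : V, w ≠ 0 → (∀ v, B w v = 0) → False := by
    intro w hw h0
    apply hB0
    have : ¬ ∀ φ : Module.Dual F V, φ w = 0 := by
      rw [Module.forall_dual_apply_eq_zero_iff]; exact hw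
    push_neg at this
    obtain ⟨φ, hφ⟩ := this
    ext u v
    have hXw : ((φ w)⁻¹ • φ).smulRight u w = u := by
      simp [LinearMap.smulRight_apply, smul_smul, inv_mul_cancel₀ hφ]
    calc B u v = B ((((φ w)⁻¹ • φ).smulRight u) w) v := by rw [hXw]
      _ = B w (dag (((φ w)⁻¹ • φ).smulRight u) v) := hB _ _ _
      _ = 0 := h0 _
  -- B ξ ξ ≠ 0
  have hBξξ : B ξ ξ ≠ 0 := by
    intro h
    refine hkey ξ hξ fun v => ?_
    obtain ⟨c, hc⟩ := hscalE v
    calc B ξ v = B (E 0 ξ) v := by rw [hEξ]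
      _ = B ξ (E 0 v) := hBE _ _
      _ = c * B ξ ξ := by rw [hc]; simp
      _ = 0 := by rw [h, mul_zero]
  have hBξsξs : B ξs ξs ≠ 0 := by
    intro h
    refine hkey ξs hξs fun v => ?_
    obtain ⟨c, hc⟩ := hscalEs v
    calc B ξs v = B (Es 0 ξs) v := by rw [hEsξs]
      _ = B ξs (Es 0 v) := hBEs _ _
      _ = c * B ξs ξs := by rw [hc]; simp
      _ = 0 := by rw [h, mul_zero]
  -- key relations
  have hrel1 : B ξ ξs = b * B ξ ξ := by
    calc B ξ ξs = B (E 0 ξ) ξs := by rw [hEξ]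
      _ = B ξ (E 0 ξs) := hBE _ _
      _ = b * B ξ ξ := by rw [hb]; simp
  have hrel2 : B ξ ξs = a * B ξs ξs := by
    calc B ξ ξs = B ξ (Es 0 ξs) := by rw [hEsξs]
      _ = B (Es 0 ξ) ξs := (hBEs _ _).symm
      _ = a * B ξs ξs := by rw [ha]; simp
  have hBξξs : B ξ ξs ≠ 0 := by
    rw [hrel1]
    exact mul_ne_zero hbne hBξξ
  refine ⟨hBξξ, hBξsξs, hBξξs, ?_⟩
  have : ν * (B ξ ξs) ^ 2 = ν * (a * b) * (B ξ ξ * B ξs ξs) := by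
    calc ν * (B ξ ξs) ^ 2 = ν * ((b * B ξ ξ) * (a * B ξs ξs)) := by
          rw [sq]; nth_rewrite 1 [hrel1]; rw [hrel2]
      _ = ν * (a * b) * (B ξ ξ * B ξs ξs) := by ring
  rw [this, hνab, one_mul]
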